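/- Let D = {(x_t,y_t) : t = 1,…,T} ⊆ ℝ^n × ℝ^n be a finite set with associated matrices X, Y ∈ ℝ^{n×T} and Z, W ∈ ℝ^{ℓ×n}. Then the reachable sets of the minimal and maximal linear processes associated with H_D satisfy R(L_-(H_D)) = (W^{-1}Z)^n({0}) and R(L_+(H_D)) = (YX^{-1})^n({0}), where the iterates are of the set-valued maps S ↦ W^{-1}(ZS) and S ↦ Y(X^{-1}S) applied n times to {0}. -/
import Mathlib


open Matrix Set Pointwise

/-- A set-valued map from `ℝ^n` to subsets of `ℝ^n`. -/
abbrev SVMap (n : ℕ) := (Fin n → ℝ) → Set (Fin n → ℝ)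

/-- The graph of a set-valued map. -/
def graphOf {n : ℕ} (H : SVMap n) : Set ((Fin n → ℝ) × (Fin n → ℝ)) :=
  {p | p.2 ∈ H p.1}

/-- The set-valued map associated with a graph. -/
def ofGraph {n : ℕ} (G : Set ((Fin n → ℝ) × (Fin n → ℝ))) : SVMap n :=
  fun x => {y | (x, y) ∈ G}

/-- A convex cone: a nonempty convex set closed under nonnegative scalar multiplication. -/
def IsConvexCone {V : Type*} [AddCommGroup V] [Module ℝ V] (C : Set V) : Prop :=
  C.Nonempty ∧ Convex ℝ C ∧ ∀ c : ℝ, 0 ≤ c → ∀ x ∈ C, c • x ∈ C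

/-- A convex process: a set-valued map whose graph is a convex cone. -/
def IsConvexProcess {n : ℕ} (H : SVMap n) : Prop :=
  IsConvexCone (graphOf H)

/-- A linear process: a set-valued map whose graph is a linear subspace. -/
def IsLinearProcess {n : ℕ} (H : SVMap n) : Prop :=
  ∃ S : Submodule ℝ ((Fin n → ℝ) × (Fin n → ℝ)), graphOf H = (S : Set _)

/-- The domain of a set-valued map. -/
def domOf {n : ℕ} (H : SVMap n) : Set (Fin n → ℝ) := {x | (H x).Nonempty}

/-- The image of a set-valued map. -/
def imOf {n : ℕ} (H : SVMap n) : Set (Fin n → ℝ) := {y | ∃ x, y ∈ H x}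

/-- The reachable set: states reachable from the origin by a finite trajectory. -/
def reachSet {n : ℕ} (H : SVMap n) : Set (Fin n → ℝ) :=
  {ξ | ∃ (q : ℕ) (x : ℕ → (Fin n → ℝ)),
    x 0 = 0 ∧ x q = ξ ∧ ∀ k, k < q → x (k + 1) ∈ H (x k)}

/-- The null-controllable set: states steered to the origin by a finite trajectory. -/
def nullSet {n : ℕ} (H : SVMap n) : Set (Fin n → ℝ) :=
  {ξ | ∃ (q : ℕ) (x : ℕ → (Fin n → ℝ)),
    x 0 = ξ ∧ x q = 0 ∧ ∀ k, k < q → x (k + 1) ∈ H (x k)}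

/-- The feasible set: states from which an infinite trajectory emanates. -/
def feasSet {n : ℕ} (H : SVMap n) : Set (Fin n → ℝ) :=
  {ξ | ∃ x : ℕ → (Fin n → ℝ), x 0 = ξ ∧ ∀ k, x (k + 1) ∈ H (x k)}

/-- `H` is reachable if every feasible state is reachable. -/
def IsReachable {n : ℕ} (H : SVMap n) : Prop := feasSet H ⊆ reachSet H

/-- `H` is null-controllable if every feasible state is null-controllable. -/
def IsNullControllable {n : ℕ} (H : SVMap n) : Prop := feasSet H ⊆ nullSet H

/-- The minimal linear process `L_-` associated with `H`: graph `L_- = lin(graph H) = (-graph H) ∩ graph H`. -/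
def Lminus {n : ℕ} (H : SVMap n) : SVMap n := ofGraph ((-(graphOf H)) ∩ graphOf H)

/-- The maximal linear process `L_+` associated with `H`: graph `L_+ = Lin(graph H) = graph H - graph H`. -/
def Lplus {n : ℕ} (H : SVMap n) : SVMap n := ofGraph (graphOf H - graphOf H)

/-- The negative dual process: `p ∈ H^-(q)` iff `⟨p,x⟩ ≥ ⟨q,y⟩` for all `(x,y) ∈ graph H`. -/
def dualNeg {n : ℕ} (H : SVMap n) : SVMap n :=
  fun q => {p | ∀ x y, y ∈ H x → q ⬝ᵥ y ≤ p ⬝ᵥ x}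

/-- The positive dual process: `p ∈ H^+(q)` iff `⟨p,x⟩ ≤ ⟨q,y⟩` for all `(x,y) ∈ graph H`. -/
def dualPos {n : ℕ} (H : SVMap n) : SVMap n :=
  fun q => {p | ∀ x y, y ∈ H x → p ⬝ᵥ x ≤ q ⬝ᵥ y}

/-- `(lam, ξ)` is an eigenpair of `G` if `ξ ≠ 0` and `lam • ξ ∈ G(ξ)`. -/
def IsEigenpair {n : ℕ} (G : SVMap n) (lam : ℝ) (ξ : Fin n → ℝ) : Prop :=
  ξ ≠ 0 ∧ lam • ξ ∈ G ξ

/-- The conic hull: all conic (nonnegative) combinations of elements of `S`. -/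
def coneHull {V : Type*} [AddCommGroup V] [Module ℝ V] (S : Set V) : Set V :=
  {x | ∃ (k : ℕ) (c : Fin k → ℝ) (f : Fin k → V),
    (∀ i, 0 ≤ c i) ∧ (∀ i, f i ∈ S) ∧ x = ∑ i, c i • f i}

/-- The most powerful unfalsified process `H_D`: the convex process with graph `cone D`. -/
def mpup {n : ℕ} (D : Set ((Fin n → ℝ) × (Fin n → ℝ))) : SVMap n := ofGraph (coneHull D)

/-- The inner product on `ℝ^n × ℝ^n`. -/
def pairDot {n : ℕ} (p q : (Fin n → ℝ) × (Fin n → ℝ)) : ℝ := p.1 ⬝ᵥ q.1 + p.2 ⬝ᵥ q.2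

/-- The positive polar cone of a subset of `ℝ^n × ℝ^n`. -/
def polarPos {n : ℕ} (C : Set ((Fin n → ℝ) × (Fin n → ℝ))) :
    Set ((Fin n → ℝ) × (Fin n → ℝ)) :=
  {η | ∀ d ∈ C, 0 ≤ pairDot d η}

/-- The negative polar cone of a subset of `ℝ^n × ℝ^n`. -/
def polarNeg {n : ℕ} (C : Set ((Fin n → ℝ) × (Fin n → ℝ))) :
    Set ((Fin n → ℝ) × (Fin n → ℝ)) :=
  {η | ∀ d ∈ C, pairDot d η ≤ 0}

/-- The data set `D = {(x_t, y_t)}` whose elements are the column pairs of `X` and `Y`. -/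
def colPairs {n T : ℕ} (X Y : Matrix (Fin n) (Fin T) ℝ) :
    Set ((Fin n → ℝ) × (Fin n → ℝ)) :=
  {p | ∃ t : Fin T, p = (fun i => X i t, fun i => Y i t)}

/-- The rows of the matrix `[Z −W]`, viewed as pairs `(z_i, -w_i)` in `ℝ^n × ℝ^n`. -/
def rowPairsZW {m n : ℕ} (Z W : Matrix (Fin m) (Fin n) ℝ) :
    Set ((Fin n → ℝ) × (Fin n → ℝ)) :=
  {p | ∃ i : Fin m, p = (fun j => Z i j, fun j => -W i j)}

/-- `X ℝ_+^T`: the image of the nonnegative orthant under `X`. -/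
def posImage {n T : ℕ} (X : Matrix (Fin n) (Fin T) ℝ) : Set (Fin n → ℝ) :=
  {x | ∃ v : Fin T → ℝ, (∀ t, 0 ≤ v t) ∧ x = X *ᵥ v}

/-- The set-valued map `S ↦ W^{-1}(Z S)`. -/
def mapWiZ {m n : ℕ} (Z W : Matrix (Fin m) (Fin n) ℝ) :
    Set (Fin n → ℝ) → Set (Fin n → ℝ) :=
  fun S => {y | ∃ x ∈ S, W *ᵥ y = Z *ᵥ x}

/-- The set-valued map `S ↦ Z^{-1}(W S)`. -/
def mapZiW {m n : ℕ} (Z W : Matrix (Fin m) (Fin n) ℝ) :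
    Set (Fin n → ℝ) → Set (Fin n → ℝ) :=
  fun S => {y | ∃ x ∈ S, Z *ᵥ y = W *ᵥ x}

/-- The set-valued map `S ↦ Y(X^{-1} S)`. -/
def mapYXi {n T : ℕ} (X Y : Matrix (Fin n) (Fin T) ℝ) :
    Set (Fin n → ℝ) → Set (Fin n → ℝ) :=
  fun S => {y | ∃ v : Fin T → ℝ, X *ᵥ v ∈ S ∧ y = Y *ᵥ v}

/-- The set-valued map `S ↦ X(Y^{-1} S)`. -/
def mapXYi {n T : ℕ} (X Y : Matrix (Fin n) (Fin T) ℝ) :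
    Set (Fin n → ℝ) → Set (Fin n → ℝ) :=
  fun S => {y | ∃ v : Fin T → ℝ, Y *ᵥ v ∈ S ∧ y = X *ᵥ v}

/-- The image of a set under a set-valued map. -/
def imageSV {n : ℕ} (H : SVMap n) (S : Set (Fin n → ℝ)) : Set (Fin n → ℝ) :=
  {y | ∃ x ∈ S, y ∈ H x}

/-- The inverse of a set-valued map. -/
def invSV {n : ℕ} (H : SVMap n) : SVMap n := fun y => {x | y ∈ H x}

/-- The linear map `(a, b) ↦ (b, -a)` on `ℝ^n × ℝ^n`. -/
def flipMap {n : ℕ} : ((Fin n → ℝ) × (Fin n → ℝ)) → ((Fin n → ℝ) × (Fin n → ℝ)) :=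
  fun p => (p.2, -p.1)

/-- The orthogonal complement of a subset of `ℝ^n × ℝ^n`. -/
def orthPair {n : ℕ} (C : Set ((Fin n → ℝ) × (Fin n → ℝ))) :
    Set ((Fin n → ℝ) × (Fin n → ℝ)) :=
  {q | ∀ p ∈ C, pairDot p q = 0}

/-- The dual linear process `L^⊥`, with graph `{(b, -a) : (a, b) ∈ (graph L)^⊥}`. -/
def perpProcess {n : ℕ} (L : SVMap n) : SVMap n :=
  ofGraph (flipMap '' orthPair (graphOf L))

/-- The orthogonal complement of a subset of `ℝ^n`. -/
def orthVec {n : ℕ} (S : Set (Fin n → ℝ)) : Set (Fin n → ℝ) :=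
  {x | ∀ y ∈ S, x ⬝ᵥ y = 0}

section ConeBasic
variable {V : Type*} [AddCommGroup V] [Module ℝ V]

lemma mem_coneHull_of_mem {S : Set V} {x : V} (hx : x ∈ S) : x ∈ coneHull S :=
  ⟨1, fun _ => 1, fun _ => x, fun _ => zero_le_one, fun _ => hx, by simp⟩

lemma zero_mem_coneHull (S : Set V) : (0 : V) ∈ coneHull S :=
  ⟨0, fun i => i.elim0, fun i => i.elim0, fun i => i.elim0, fun i => i.elim0, by simp⟩

lemma coneHull_mono {S S' : Set V} (h : S ⊆ S') : coneHull S ⊆ coneHull S' := by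
  rintro x ⟨k, c, f, hc, hf, rfl⟩
  exact ⟨k, c, f, hc, fun i => h (hf i), rfl⟩

lemma add_mem_coneHull {S : Set V} {x y : V} (hx : x ∈ coneHull S) (hy : y ∈ coneHull S) :
    x + y ∈ coneHull S := by
  obtain ⟨k, c, f, hc, hf, rfl⟩ := hx
  obtain ⟨l, d, g, hd, hg, rfl⟩ := hy
  refine ⟨k + l, Fin.append c d, Fin.append f g, ?_, ?_, ?_⟩
  · intro i
    induction i using Fin.addCases with
    | left j => simpa using hc j
    | right j => simpa using hd j
  · intro i
    induction i using Fin.addCases with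
    | left j => simpa using hf j
    | right j => simpa using hg j
  · rw [Fin.sum_univ_add]
    simp

lemma smul_mem_coneHull {S : Set V} {a : ℝ} (ha : 0 ≤ a) {x : V} (hx : x ∈ coneHull S) :
    a • x ∈ coneHull S := by
  obtain ⟨k, c, f, hc, hf, rfl⟩ := hx
  exact ⟨k, fun i => a * c i, f, fun i => mul_nonneg ha (hc i), hf, by
    rw [Finset.smul_sum]; simp [smul_smul]⟩

lemma convex_coneHull (S : Set V) : Convex ℝ (coneHull S) := by
  intro x hx y hy a b ha hb _
  exact add_mem_coneHull (smul_mem_coneHull ha hx) (smul_mem_coneHull hb hy)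

lemma coneHull_subset_span (S : Set V) : coneHull S ⊆ (Submodule.span ℝ S : Set V) := by
  rintro x ⟨k, c, f, hc, hf, rfl⟩
  exact Submodule.sum_mem _ fun i _ =>
    Submodule.smul_mem _ _ (Submodule.subset_span (hf i))

lemma sum_mem_coneHull {S : Set V} {t : Finset V} {c : V → ℝ}
    (hc : ∀ v ∈ t, 0 ≤ c v) (hts : (t : Set V) ⊆ S) :
    ∑ v ∈ t, c v • v ∈ coneHull S := by
  classical
  induction t using Finset.induction with
  | empty => simpa using zero_mem_coneHull S
  | @insert a s ha ih =>
    rw [Finset.sum_insert ha]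
    refine add_mem_coneHull (smul_mem_coneHull (hc a (by simp)) (mem_coneHull_of_mem (hts (by simp))))
      (ih (fun v hv => hc v (by simp [hv])) (fun v hv => hts (by simp [Finset.mem_coe.mp hv])))

lemma mem_coneHull_iff_finset {S : Set V} {x : V} :
    x ∈ coneHull S ↔ ∃ t : Finset V, (t : Set V) ⊆ S ∧
      ∃ c : V → ℝ, (∀ v ∈ t, 0 ≤ c v) ∧ x = ∑ v ∈ t, c v • v := by
  classical
  constructor
  · rintro ⟨k, c, f, hc, hf, rfl⟩
    refine ⟨Finset.image f Finset.univ, ?_, fun v => ∑ i ∈ Finset.univ.filter (fun i => f i = v), c i, ?_, ?_⟩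
    · intro v hv
      obtain ⟨i, _, rfl⟩ := Finset.mem_image.mp hv
      exact hf i
    · intro v _
      exact Finset.sum_nonneg fun i _ => hc i
    · rw [← Finset.sum_fiberwise_of_maps_to (fun i _ => Finset.mem_image_of_mem f (Finset.mem_univ i)) (fun i => c i • f i)]
      refine Finset.sum_congr rfl fun v _ => ?_
      rw [Finset.sum_smul]
      refine Finset.sum_congr rfl fun i hi => ?_
      rw [(Finset.mem_filter.mp hi).2]
  · rintro ⟨t, hts, c, hc, rfl⟩
    exact sum_mem_coneHull hc hts

end ConeBasic

section Carath
variable {V : Type*} [AddCommGroup V] [Module ℝ V]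

lemma caratheodory_cone_aux : ∀ (N : ℕ) (t : Finset V), t.card ≤ N →
    ∀ c : V → ℝ, (∀ v ∈ t, 0 ≤ c v) →
    ∃ t' : Finset V, t' ⊆ t ∧ LinearIndependent ℝ ((↑) : ↥(t' : Set V) → V) ∧
      ∃ c' : V → ℝ, (∀ v ∈ t', 0 ≤ c' v) ∧ ∑ v ∈ t', c' v • v = ∑ v ∈ t, c v • v := by
  classical
  intro N
  induction N with
  | zero =>
    intro t ht c hc
    rw [Nat.le_zero, Finset.card_eq_zero] at ht
    subst ht
    exact ⟨∅, Finset.Subset.refl _, by simp [linearIndependent_empty_type], c, by simp, by simp⟩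
  | succ N ih =>
    intro t ht c hc
    by_cases hli : LinearIndependent ℝ ((↑) : ↥(t : Set V) → V)
    · exact ⟨t, Finset.Subset.refl _, hli, c, hc, rfl⟩
    · -- get a nontrivial relation
      rw [show ((↑) : ↥(t : Set V) → V) = fun v : ↥(t : Set V) => (v : V) from rfl] at hli
      obtain ⟨g, hg0, i0, hgi0⟩ := Fintype.not_linearIndependent_iff.mp hli
      -- extended coefficients
      set gg : V → ℝ := fun v => if h : v ∈ t then g ⟨v, h⟩ else 0 with hgg
      have hggsum : ∑ v ∈ t, gg v • v = 0 := by
        rw [← Finset.sum_attach t (fun v => gg v • v)]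
        rw [← hg0]
        refine Finset.sum_congr rfl fun i _ => ?_
        simp [hgg, i.2]
      have hggne : ∃ v ∈ t, gg v ≠ 0 := ⟨i0, i0.2, by simpa [hgg, i0.2] using hgi0⟩
      -- WLOG there is a positive coefficient
      have key : ∀ gg : V → ℝ, (∑ v ∈ t, gg v • v = 0) → (∃ v ∈ t, 0 < gg v) →
          ∃ t' : Finset V, t' ⊆ t ∧ LinearIndependent ℝ ((↑) : ↥(t' : Set V) → V) ∧
          ∃ c' : V → ℝ, (∀ v ∈ t', 0 ≤ c' v) ∧ ∑ v ∈ t', c' v • v = ∑ v ∈ t, c v • v := by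
        intro gg hsum hpos
        set P := t.filter (fun v => 0 < gg v) with hP
        have hPne : P.Nonempty := by
          obtain ⟨v, hv, hv'⟩ := hpos
          exact ⟨v, Finset.mem_filter.mpr ⟨hv, hv'⟩⟩
        obtain ⟨v0, hv0P, hv0min⟩ := Finset.exists_min_image P (fun v => c v / gg v) hPne
        obtain ⟨hv0t, hv0pos⟩ := Finset.mem_filter.mp hv0P
        set μ := c v0 / gg v0 with hμ
        have hμ0 : 0 ≤ μ := div_nonneg (hc v0 hv0t) hv0pos.le
        set c' : V → ℝ := fun v => c v - μ * gg v with hc'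
        have hc'nn : ∀ v ∈ t, 0 ≤ c' v := by
          intro v hv
          by_cases h : 0 < gg v
          · have := hv0min v (Finset.mem_filter.mpr ⟨hv, h⟩)
            have : μ * gg v ≤ c v := (le_div_iff₀ h).mp this
            simp [hc']; linarith
          · push_neg at h
            have : μ * gg v ≤ 0 := mul_nonpos_of_nonneg_of_nonpos hμ0 h
            have := hc v hv
            simp [hc']; linarith
        have hc'v0 : c' v0 = 0 := by
          simp [hc', hμ, div_mul_cancel₀ (c v0) (ne_of_gt hv0pos)]
        have hsum' : ∑ v ∈ t.erase v0, c' v • v = ∑ v ∈ t, c v • v := by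
          rw [Finset.sum_erase _ (by rw [hc'v0]; simp)]
          have : ∑ v ∈ t, c' v • v = ∑ v ∈ t, c v • v - μ • ∑ v ∈ t, gg v • v := by
            rw [Finset.smul_sum, ← Finset.sum_sub_distrib]
            refine Finset.sum_congr rfl fun v _ => ?_
            simp [hc', sub_smul, smul_smul]
          rw [this, hsum, smul_zero, sub_zero]
        have hcard : (t.erase v0).card ≤ N := by
          have := Finset.card_erase_of_mem hv0t
          omega
        obtain ⟨t', ht'sub, ht'li, c'', hc''nn, hc''sum⟩ :=
          ih (t.erase v0) hcard c' (fun v hv => hc'nn v (Finset.mem_of_mem_erase hv))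
        exact ⟨t', ht'sub.trans (Finset.erase_subset _ _), ht'li, c'', hc''nn,
          by rw [hc''sum, hsum']⟩
      obtain ⟨v, hvt, hvne⟩ := hggne
      rcases lt_or_gt_of_ne hvne with hneg | hpos
      · refine key (fun v => -gg v) ?_ ⟨v, hvt, show (0:ℝ) < -gg v by linarith⟩
        simp only [neg_smul, Finset.sum_neg_distrib]
        rw [hggsum, neg_zero]
      · exact key gg hggsum ⟨v, hvt, hpos⟩

lemma caratheodory_cone {S : Set V} {x : V} (hx : x ∈ coneHull S) :
    ∃ t' : Finset V, (t' : Set V) ⊆ S ∧ LinearIndependent ℝ ((↑) : ↥(t' : Set V) → V) ∧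
      x ∈ coneHull (t' : Set V) := by
  classical
  obtain ⟨t, hts, c, hc, rfl⟩ := mem_coneHull_iff_finset.mp hx
  obtain ⟨t', ht'sub, ht'li, c', hc'nn, hc'sum⟩ := caratheodory_cone_aux t.card t le_rfl c hc
  refine ⟨t', (Finset.coe_subset.mpr ht'sub).trans hts, ht'li, ?_⟩
  rw [← hc'sum]
  exact sum_mem_coneHull hc'nn (fun v hv => hv)

end Carath

section Closed
variable {V : Type*} [NormedAddCommGroup V] [NormedSpace ℝ V] [FiniteDimensional ℝ V]

noncomputable def comboMap (ι : Type*) [Fintype ι] (v : ι → V) : (ι → ℝ) →ₗ[ℝ] V where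
  toFun g := ∑ i, g i • v i
  map_add' a b := by simp [add_smul, Finset.sum_add_distrib]
  map_smul' a b := by simp [smul_smul, Finset.smul_sum]

lemma isClosed_coneHull_of_linearIndependent (t : Finset V)
    (h : LinearIndependent ℝ ((↑) : ↥(t : Set V) → V)) :
    IsClosed (coneHull (t : Set V)) := by
  classical
  set L := comboMap ↥(t : Set V) (fun v => (v : V)) with hLdef
  have hL : ∀ g, L g = ∑ i : ↥(t : Set V), g i • (i : V) := fun g => rfl
  have hker : LinearMap.ker L = ⊥ := by
    rw [LinearMap.ker_eq_bot']
    intro g hg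
    funext i
    exact Fintype.linearIndependent_iff.mp h g hg i
  have hemb := LinearMap.isClosedEmbedding_of_injective hker
  have horth : IsClosed {g : ↥(t : Set V) → ℝ | ∀ i, 0 ≤ g i} := by
    have : {g : ↥(t : Set V) → ℝ | ∀ i, 0 ≤ g i}
        = ⋂ i, (fun g : ↥(t : Set V) → ℝ => g i) ⁻¹' Set.Ici 0 := by
      ext g; simp [Set.mem_iInter]
    rw [this]
    exact isClosed_iInter fun i => IsClosed.preimage (continuous_apply i) isClosed_Ici
  have himg : coneHull (t : Set V) = L '' {g | ∀ i, 0 ≤ g i} := by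
    ext x
    constructor
    · intro hx
      obtain ⟨s, hst, c, hcnn, rfl⟩ := mem_coneHull_iff_finset.mp hx
      have hsub : s ⊆ t := fun v hv => Finset.mem_coe.mp (hst hv)
      refine ⟨fun i => if (i : V) ∈ s then c i else 0, fun i => ?_, ?_⟩
      · dsimp only
        split
        · exact hcnn _ ‹_›
        · exact le_rfl
      · rw [hL]
        rw [Finset.sum_finset_coe (fun v => (if v ∈ s then c v else 0) • v) t]
        simp only [ite_smul, zero_smul]
        rw [Finset.sum_ite_mem, Finset.inter_eq_right.mpr hsub]
    · rintro ⟨g, hg, rfl⟩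
      rw [hL]
      have : ∑ i : ↥(t : Set V), g i • (i : V)
          = ∑ v ∈ t, (fun v => if h : v ∈ t then g ⟨v, h⟩ else 0) v • v := by
        rw [← Finset.sum_finset_coe (fun v => (if h : v ∈ t then g ⟨v, h⟩ else 0) • v) t]
        exact Finset.sum_congr rfl fun i _ => by rw [dif_pos (Finset.mem_coe.mp i.2)]
      rw [this]
      exact sum_mem_coneHull (fun v hv => by simp [hv]; exact hg _) (fun v hv => hv)
  rw [himg]
  exact hemb.isClosedMap _ horth

end Closed

lemma isClosed_coneHull_of_finite {V : Type*} [NormedAddCommGroup V] [NormedSpace ℝ V]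
    [FiniteDimensional ℝ V] {S : Set V} (hS : S.Finite) : IsClosed (coneHull S) := by
  classical
  obtain ⟨T₀, rfl⟩ : ∃ T₀ : Finset V, S = ↑T₀ := ⟨hS.toFinset, hS.coe_toFinset.symm⟩
  have hunion : coneHull (T₀ : Set V) =
      ⋃ t ∈ {t : Finset V | t ⊆ T₀ ∧ LinearIndependent ℝ ((↑) : ↥(t : Set V) → V)},
        coneHull (t : Set V) := by
    ext x
    constructor
    · intro hx
      obtain ⟨t, hts, hli, hmem⟩ := caratheodory_cone hx
      exact Set.mem_biUnion ⟨Finset.coe_subset.mp hts, hli⟩ hmem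
    · intro hx
      obtain ⟨t, ht, hmem⟩ := Set.mem_iUnion₂.mp hx
      exact coneHull_mono (Finset.coe_subset.mpr ht.1) hmem
  rw [hunion]
  refine Set.Finite.isClosed_biUnion ?_ fun t ht => isClosed_coneHull_of_linearIndependent t ht.2
  exact Set.Finite.subset (T₀.powerset : Finset (Finset V)).finite_toSet
    (fun t ht => Finset.mem_coe.mpr (Finset.mem_powerset.mpr ht.1))

lemma exists_separating_of_notMem_coneHull {V : Type*} [NormedAddCommGroup V] [NormedSpace ℝ V]
    [FiniteDimensional ℝ V] {S : Set V} (hS : S.Finite) {p : V} (hp : p ∉ coneHull S) :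
    ∃ f : V →L[ℝ] ℝ, (∀ d ∈ coneHull S, f d ≤ 0) ∧ 0 < f p := by
  obtain ⟨f, u, hfu, hup⟩ := geometric_hahn_banach_closed_point (convex_coneHull S)
    (isClosed_coneHull_of_finite hS) hp
  have hu0 : 0 < u := by have := hfu 0 (zero_mem_coneHull S); simpa using this
  refine ⟨f, ?_, by linarith⟩
  intro d hd
  by_contra hpos
  push_neg at hpos
  have hmem : ((u / f d + 1) • d) ∈ coneHull S :=
    smul_mem_coneHull (by positivity) hd
  have h2 := hfu _ hmem
  rw [_root_.map_smul, smul_eq_mul, add_mul, one_mul, div_mul_cancel₀ u (ne_of_gt hpos)] at h2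
  linarith

lemma pair_rep {n : ℕ} (q : (Fin n → ℝ) × (Fin n → ℝ)) :
    q = ∑ i, q.1 i • ((Pi.single i 1 : Fin n → ℝ), (0 : Fin n → ℝ))
      + ∑ i, q.2 i • ((0 : Fin n → ℝ), (Pi.single i 1 : Fin n → ℝ)) := by
  have h1 : ∀ x : Fin n → ℝ, ∑ i, x i • (Pi.single i 1 : Fin n → ℝ) = x := by
    intro x
    have hs : ∀ i, x i • (Pi.single i 1 : Fin n → ℝ) = Pi.single i (x i) := fun i => by
      rw [← Pi.single_smul]; simp
    simp_rw [hs]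
    exact Finset.univ_sum_single x
  apply Prod.ext
  · simpa [Prod.fst_sum] using (h1 q.1).symm
  · simpa [Prod.snd_sum] using (h1 q.2).symm

lemma exists_polar_witness {n : ℕ} {D : Set ((Fin n → ℝ) × (Fin n → ℝ))} (hD : D.Finite)
    {p : (Fin n → ℝ) × (Fin n → ℝ)} (hp : p ∉ coneHull D) :
    ∃ η ∈ polarPos D, pairDot p η < 0 := by
  obtain ⟨f, hf, hfp⟩ := exists_separating_of_notMem_coneHull hD hp
  set η : (Fin n → ℝ) × (Fin n → ℝ) :=
    (fun i => -f (Pi.single i 1, 0), fun i => -f (0, Pi.single i 1)) with hη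
  have hdot : ∀ q : (Fin n → ℝ) × (Fin n → ℝ), pairDot q η = -f q := by
    intro q
    have hq := pair_rep q
    calc pairDot q η
        = -(∑ i, q.1 i * f (Pi.single i 1, 0) + ∑ i, q.2 i * f (0, Pi.single i 1)) := by
          simp [pairDot, hη, dotProduct, mul_neg, neg_add]
          ring
      _ = -f q := by
          conv_rhs => rw [hq]
          rw [map_add, map_sum, map_sum]
          have e1 : ∀ i : Fin n, f (q.1 i • ((Pi.single i 1 : Fin n → ℝ), (0 : Fin n → ℝ)))
              = q.1 i * f (Pi.single i 1, 0) := fun i => by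
            rw [ContinuousLinearMap.map_smul, smul_eq_mul]
          have e2 : ∀ i : Fin n, f (q.2 i • ((0 : Fin n → ℝ), (Pi.single i 1 : Fin n → ℝ)))
              = q.2 i * f (0, Pi.single i 1) := fun i => by
            rw [ContinuousLinearMap.map_smul, smul_eq_mul]
          simp_rw [e1, e2]
  refine ⟨η, fun d hd => ?_, ?_⟩
  · rw [hdot d]
    linarith [hf d (mem_coneHull_of_mem hd)]
  · rw [hdot p]
    linarith

lemma graphOf_ofGraph {n : ℕ} (G : Set ((Fin n → ℝ) × (Fin n → ℝ))) :
    graphOf (ofGraph G) = G := rfl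

lemma sum_dotProduct' {ι : Type*} {n : ℕ} (s : Finset ι) (v : ι → Fin n → ℝ) (w : Fin n → ℝ) :
    (∑ i ∈ s, v i) ⬝ᵥ w = ∑ i ∈ s, v i ⬝ᵥ w := by
  classical
  induction s using Finset.induction with
  | empty => simp [zero_dotProduct]
  | @insert a s ha ih => simp [Finset.sum_insert ha, add_dotProduct, ih]

lemma dotProduct_sum' {ι : Type*} {n : ℕ} (s : Finset ι) (v : ι → Fin n → ℝ) (w : Fin n → ℝ) :
    w ⬝ᵥ (∑ i ∈ s, v i) = ∑ i ∈ s, w ⬝ᵥ v i := by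
  classical
  induction s using Finset.induction with
  | empty => simp [dotProduct_zero]
  | @insert a s ha ih => simp [Finset.sum_insert ha, dotProduct_add, ih]

lemma pairDot_sum_left {n k : ℕ} (c : Fin k → ℝ) (f : Fin k → (Fin n → ℝ) × (Fin n → ℝ))
    (η : (Fin n → ℝ) × (Fin n → ℝ)) :
    pairDot (∑ i, c i • f i) η = ∑ i, c i * pairDot (f i) η := by
  simp only [pairDot, Prod.fst_sum, Prod.snd_sum, Prod.smul_fst, Prod.smul_snd]
  rw [sum_dotProduct', sum_dotProduct']
  simp [smul_dotProduct, smul_eq_mul, mul_add, Finset.sum_add_distrib]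

lemma pairDot_sum_right {n k : ℕ} (c : Fin k → ℝ) (f : Fin k → (Fin n → ℝ) × (Fin n → ℝ))
    (p : (Fin n → ℝ) × (Fin n → ℝ)) :
    pairDot p (∑ i, c i • f i) = ∑ i, c i * pairDot p (f i) := by
  simp only [pairDot, Prod.fst_sum, Prod.snd_sum, Prod.smul_fst, Prod.smul_snd]
  rw [dotProduct_sum', dotProduct_sum']
  simp [dotProduct_smul, smul_eq_mul, mul_add, Finset.sum_add_distrib]

lemma pairDot_neg_left {n : ℕ} (p η : (Fin n → ℝ) × (Fin n → ℝ)) :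
    pairDot (-p) η = -pairDot p η := by
  simp [pairDot, neg_dotProduct]
  ring

lemma pairDot_nonneg_of_mem {n : ℕ} {D : Set ((Fin n → ℝ) × (Fin n → ℝ))}
    {p η : (Fin n → ℝ) × (Fin n → ℝ)} (hp : p ∈ coneHull D) (hη : η ∈ polarPos D) :
    0 ≤ pairDot p η := by
  obtain ⟨k, c, f, hc, hf, rfl⟩ := hp
  rw [pairDot_sum_left]
  exact Finset.sum_nonneg fun i _ => mul_nonneg (hc i) (hη _ (hf i))

/-- The reachable set of a linear process is the `n`-th iterate of its image map on `{0}`. -/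
lemma reach_linear {n : ℕ} (G : Submodule ℝ ((Fin n → ℝ) × (Fin n → ℝ)))
    (F : Set (Fin n → ℝ) → Set (Fin n → ℝ))
    (hF : ∀ S, F S = {y | ∃ x ∈ S, (x, y) ∈ G}) :
    reachSet (ofGraph (G : Set _)) = F^[n] {0} := by
  classical
  set F' : Submodule ℝ (Fin n → ℝ) → Submodule ℝ (Fin n → ℝ) := fun S =>
    Submodule.map (LinearMap.snd ℝ (Fin n → ℝ) (Fin n → ℝ))
      (Submodule.comap (LinearMap.fst ℝ (Fin n → ℝ) (Fin n → ℝ)) S ⊓ G) with hF'def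
  have hF'coe : ∀ S : Submodule ℝ (Fin n → ℝ), (F' S : Set (Fin n → ℝ)) = F (S : Set _) := by
    intro S
    rw [hF]
    ext y
    simp only [hF'def, Submodule.map_coe, Set.mem_image, SetLike.mem_coe, Submodule.mem_inf,
      Submodule.mem_comap]
    constructor
    · rintro ⟨p, ⟨h1, h2⟩, rfl⟩
      exact ⟨p.1, h1, h2⟩
    · rintro ⟨x, hx, hxy⟩
      exact ⟨(x, y), ⟨hx, hxy⟩, rfl⟩
  have hiter : ∀ q : ℕ, F^[q] {0} = ((F'^[q] ⊥ : Submodule ℝ (Fin n → ℝ)) : Set _) := by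
    intro q
    induction q with
    | zero => simp
    | succ q ih =>
      rw [Function.iterate_succ_apply', Function.iterate_succ_apply', ih, hF'coe]
  -- monotonicity of the chain
  have hF'mono : Monotone F' := by
    intro S S' hSS'
    exact Submodule.map_mono (inf_le_inf_right _ (Submodule.comap_mono hSS'))
  have hstep : ∀ q : ℕ, F'^[q] ⊥ ≤ F'^[q + 1] ⊥ := by
    intro q
    induction q with
    | zero =>
      intro x hx
      simp only [Function.iterate_zero_apply] at hx
      rw [Submodule.mem_bot] at hx
      subst hx
      rw [Function.iterate_one]
      exact ⟨(0, 0), ⟨by simp, Submodule.zero_mem G⟩, rfl⟩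
    | succ q ih =>
      rw [Function.iterate_succ_apply', Function.iterate_succ_apply']
      exact hF'mono ih
  have hmono : ∀ {a b : ℕ}, a ≤ b → F'^[a] ⊥ ≤ F'^[b] ⊥ := by
    intro a b hab
    induction b with
    | zero => simp_all
    | succ b ih =>
      rcases Nat.lt_or_ge a (b+1) with h | h
      · exact le_trans (ih (by omega)) (hstep b)
      · have : a = b + 1 := by omega
        subst this
        exact le_rfl
  have hstab : ∀ q : ℕ, n ≤ q → F'^[q] ⊥ = F'^[n] ⊥ := by
    -- find stabilization point
    have hexists : ∃ q ≤ n, F'^[q] ⊥ = F'^[q+1] ⊥ := by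
      by_contra hcon
      push_neg at hcon
      have hrank : ∀ q ≤ n + 1, q ≤ Module.finrank ℝ (F'^[q] ⊥ : Submodule ℝ (Fin n → ℝ)) := by
        intro q hq
        induction q with
        | zero => simp
        | succ q ih =>
          have h1 := ih (by omega)
          have hlt : F'^[q] ⊥ < F'^[q+1] ⊥ :=
            lt_of_le_of_ne (hstep q) (hcon q (by omega))
          have := Submodule.finrank_lt_finrank_of_lt hlt
          omega
      have h1 := hrank (n+1) le_rfl
      have h2 : Module.finrank ℝ (F'^[n+1] ⊥ : Submodule ℝ (Fin n → ℝ)) ≤ n := by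
        have := Submodule.finrank_le (F'^[n+1] ⊥ : Submodule ℝ (Fin n → ℝ))
        simpa using this
      omega
    obtain ⟨q0, hq0n, hq0⟩ := hexists
    have hconst : ∀ k : ℕ, F'^[q0 + k] ⊥ = F'^[q0] ⊥ := by
      intro k
      induction k with
      | zero => rfl
      | succ k ih =>
        have h1 : F'^[q0 + (k+1)] ⊥ = F' (F'^[q0 + k] ⊥) := Function.iterate_succ_apply' F' (q0+k) ⊥
        rw [h1, ih, ← Function.iterate_succ_apply' F' q0 ⊥, ← hq0]
    intro q hq
    have e1 : F'^[q] ⊥ = F'^[q0] ⊥ := by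
      have := hconst (q - q0)
      rwa [show q0 + (q - q0) = q by omega] at this
    have e2 : F'^[n] ⊥ = F'^[q0] ⊥ := by
      have := hconst (n - q0)
      rwa [show q0 + (n - q0) = n by omega] at this
    rw [e1, e2]
  -- now identify the reachable set
  ext ξ
  rw [hiter n]
  constructor
  · rintro ⟨q, x, hx0, hxq, hstp⟩
    have hmemq : ∀ k ≤ q, x k ∈ F'^[k] ⊥ := by
      intro k
      induction k with
      | zero => intro _; simp [hx0]
      | succ k ih =>
        intro hk
        rw [Function.iterate_succ_apply']
        exact ⟨(x k, x (k+1)), ⟨ih (by omega) , hstp k (by omega)⟩, rfl⟩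
    have := hmemq q le_rfl
    rw [hxq] at this
    rcases le_or_gt q n with h | h
    · exact hmono h this
    · rw [hstab q h.le] at this
      exact this
  · intro hξ
    suffices h : ∀ (q : ℕ) (ζ : Fin n → ℝ), ζ ∈ F'^[q] ⊥ → ζ ∈ reachSet (ofGraph (G : Set _)) by
      exact h n ξ hξ
    intro q
    induction q with
    | zero =>
      intro ζ hζ
      rw [Function.iterate_zero_apply, Submodule.mem_bot] at hζ
      exact ⟨0, fun _ => 0, rfl, hζ.symm, fun k hk => by omega⟩
    | succ q ih =>
      intro ζ hζ
      rw [Function.iterate_succ_apply'] at hζ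
      obtain ⟨p, hpmem, hp3⟩ := Submodule.mem_map.mp hζ
      obtain ⟨a, b⟩ := p
      have hb : b = ζ := hp3
      subst hb
      have hp1 : a ∈ F'^[q] ⊥ := Submodule.mem_comap.mp hpmem.1
      have hp2 : ((a, b) : (Fin n → ℝ) × (Fin n → ℝ)) ∈ G := hpmem.2
      obtain ⟨q', y, hy0, hyq, hstp⟩ := ih a hp1
      refine ⟨q' + 1, fun k => if k ≤ q' then y k else b, by simp [hy0], by simp, ?_⟩
      intro k hk
      rcases Nat.lt_or_ge k q' with h | h
      · have h1 : k ≤ q' := h.le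
        have h2 : k + 1 ≤ q' := h
        simp only [if_pos h1, if_pos h2]
        exact hstp k h
      · have hkq : k = q' := by omega
        subst hkq
        simp only [if_pos le_rfl, if_neg (by omega : ¬ k + 1 ≤ k)]
        show ((y k, b) : (Fin n → ℝ) × (Fin n → ℝ)) ∈ (G : Set _)
        rw [hyq]
        exact hp2



/-- Reachable sets of the minimal and maximal linear processes of `H_D`:
`R(L_-(H_D)) = (W^{-1}Z)^n({0})` and `R(L_+(H_D)) = (YX^{-1})^n({0})`. -/
theorem stmt11 {n T m : ℕ} (X Y : Matrix (Fin n) (Fin T) ℝ) (Z W : Matrix (Fin m) (Fin n) ℝ)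
    (hZW : polarPos (colPairs X Y) = coneHull (rowPairsZW Z W)) :
    reachSet (Lminus (mpup (colPairs X Y))) = (mapWiZ Z W)^[n] {0} ∧
    reachSet (Lplus (mpup (colPairs X Y))) = (mapYXi X Y)^[n] {0} := by
  classical
  set D := colPairs X Y with hD
  have hDfin : D.Finite := by
    have : D = Set.range
        (fun t : Fin T => ((fun i => X i t, fun i => Y i t) : (Fin n → ℝ) × (Fin n → ℝ))) := by
      ext p
      simp [hD, colPairs, Set.mem_range, eq_comm]
    rw [this]
    exact Set.finite_range _
  have hrow : ∀ i : Fin m,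
      ((fun j => Z i j, fun j => -W i j) : (Fin n → ℝ) × (Fin n → ℝ)) ∈ polarPos D := by
    intro i
    rw [hD, hZW]
    exact mem_coneHull_of_mem ⟨i, rfl⟩
  have hrowdot : ∀ (p : (Fin n → ℝ) × (Fin n → ℝ)) (i : Fin m),
      pairDot p ((fun j => Z i j, fun j => -W i j) : (Fin n → ℝ) × (Fin n → ℝ))
        = (Z *ᵥ p.1) i - (W *ᵥ p.2) i := by
    intro p i
    simp only [pairDot, dotProduct, Matrix.mulVec]
    rw [sub_eq_add_neg, ← Finset.sum_neg_distrib]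
    congr 1 <;> exact Finset.sum_congr rfl fun j _ => by ring
  -- hard direction: the kernel condition implies cone membership
  have hmem : ∀ p : (Fin n → ℝ) × (Fin n → ℝ), W *ᵥ p.2 = Z *ᵥ p.1 → p ∈ coneHull D := by
    intro p hWZ
    by_contra hp
    obtain ⟨η, hηpolar, hηneg⟩ := exists_polar_witness hDfin hp
    rw [hD, hZW] at hηpolar
    obtain ⟨k, c, r, hc, hr, rfl⟩ := hηpolar
    rw [pairDot_sum_right] at hηneg
    have hzero : ∀ i, pairDot p (r i) = 0 := by
      intro i
      obtain ⟨j, hj⟩ := hr i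
      rw [hj, hrowdot, hWZ, sub_self]
    simp [hzero] at hηneg
  -- the minimal linear process submodule
  set Gm : Submodule ℝ ((Fin n → ℝ) × (Fin n → ℝ)) :=
    LinearMap.ker ((Matrix.mulVecLin W).comp (LinearMap.snd ℝ (Fin n → ℝ) (Fin n → ℝ))
      - (Matrix.mulVecLin Z).comp (LinearMap.fst ℝ (Fin n → ℝ) (Fin n → ℝ))) with hGmdef
  have hGmmem : ∀ p : (Fin n → ℝ) × (Fin n → ℝ), p ∈ Gm ↔ W *ᵥ p.2 = Z *ᵥ p.1 := by
    intro p
    simp [hGmdef, LinearMap.mem_ker, sub_eq_zero, LinearMap.sub_apply, LinearMap.comp_apply]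
  have hLmGraph : (-(coneHull D) ∩ coneHull D : Set _) = (Gm : Set _) := by
    ext p
    constructor
    · rintro ⟨hneg, hpos⟩
      have h1 : -p ∈ coneHull D := Set.mem_neg.mp hneg
      rw [SetLike.mem_coe, hGmmem]
      funext i
      have e1 := pairDot_nonneg_of_mem hpos (hrow i)
      have e2 := pairDot_nonneg_of_mem h1 (hrow i)
      rw [pairDot_neg_left] at e2
      have e3 : pairDot p ((fun j => Z i j, fun j => -W i j) :
          (Fin n → ℝ) × (Fin n → ℝ)) = 0 := le_antisymm (by linarith) e1
      rw [hrowdot] at e3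
      linarith
    · intro hp
      rw [SetLike.mem_coe, hGmmem] at hp
      refine ⟨Set.mem_neg.mpr (hmem (-p) ?_), hmem p hp⟩
      simp only [Prod.fst_neg, Prod.snd_neg, Matrix.mulVec_neg, hp]
  -- the maximal linear process submodule
  set Gp : Submodule ℝ ((Fin n → ℝ) × (Fin n → ℝ)) :=
    LinearMap.range ((Matrix.mulVecLin X).prod (Matrix.mulVecLin Y)) with hGpdef
  have hGpmem : ∀ p : (Fin n → ℝ) × (Fin n → ℝ),
      p ∈ Gp ↔ ∃ v : Fin T → ℝ, ((X *ᵥ v, Y *ᵥ v) : (Fin n → ℝ) × (Fin n → ℝ)) = p := by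
    intro p
    simp [hGpdef, LinearMap.mem_range, LinearMap.prod_apply, Prod.ext_iff]
  have hpairsum : ∀ v : Fin T → ℝ,
      ((X *ᵥ v, Y *ᵥ v) : (Fin n → ℝ) × (Fin n → ℝ))
        = ∑ t, v t • ((fun i => X i t, fun i => Y i t) : (Fin n → ℝ) × (Fin n → ℝ)) := by
    intro v
    have hX : X *ᵥ v = ∑ t, v t • (fun i => X i t) := by
      funext i
      simp [Matrix.mulVec, dotProduct, Finset.sum_apply, mul_comm]
    have hY : Y *ᵥ v = ∑ t, v t • (fun i => Y i t) := by
      funext i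
      simp [Matrix.mulVec, dotProduct, Finset.sum_apply, mul_comm]
    apply Prod.ext
    · simp only [Prod.fst_sum, Prod.smul_fst]
      exact hX
    · simp only [Prod.snd_sum, Prod.smul_snd]
      exact hY
  have hposmem : ∀ v : Fin T → ℝ, (∀ t, 0 ≤ v t) →
      ((X *ᵥ v, Y *ᵥ v) : (Fin n → ℝ) × (Fin n → ℝ)) ∈ coneHull D := by
    intro v hv
    rw [hpairsum v]
    exact ⟨T, v, fun t => (fun i => X i t, fun i => Y i t), hv, fun t => ⟨t, rfl⟩, rfl⟩
  have hLpGraph : (coneHull D - coneHull D : Set _) = (Gp : Set _) := by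
    have hspanle : Submodule.span ℝ D ≤ Gp := by
      rw [Submodule.span_le]
      rintro d ⟨t, rfl⟩
      rw [SetLike.mem_coe, hGpmem]
      refine ⟨Pi.single t 1, ?_⟩
      rw [Matrix.mulVec_single_one, Matrix.mulVec_single_one]
      rfl
    ext p
    constructor
    · intro hp
      obtain ⟨a, ha, b, hb, rfl⟩ := Set.mem_sub.mp hp
      exact Submodule.sub_mem _ (hspanle (coneHull_subset_span D ha))
        (hspanle (coneHull_subset_span D hb))
    · intro hp
      rw [SetLike.mem_coe, hGpmem] at hp
      obtain ⟨v, rfl⟩ := hp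
      set vp : Fin T → ℝ := fun t => max (v t) 0 with hvp
      set vm : Fin T → ℝ := fun t => max (-v t) 0 with hvm
      have hsplit : v = vp - vm := by
        funext t
        simp only [hvp, hvm, Pi.sub_apply]
        rcases le_total (v t) 0 with h | h
        · rw [max_eq_right h, max_eq_left (by linarith)]
          ring
        · rw [max_eq_left h, max_eq_right (by linarith)]
          ring
      rw [Set.mem_sub]
      refine ⟨(X *ᵥ vp, Y *ᵥ vp), hposmem vp (fun t => le_max_right _ _),
        (X *ᵥ vm, Y *ᵥ vm), hposmem vm (fun t => le_max_right _ _), ?_⟩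
      rw [Prod.mk_sub_mk, ← Matrix.mulVec_sub, ← Matrix.mulVec_sub, ← hsplit]
  constructor
  · have heq : Lminus (mpup D) = ofGraph (Gm : Set _) := congrArg ofGraph hLmGraph
    rw [heq]
    refine reach_linear Gm (mapWiZ Z W) ?_
    intro S
    ext y
    simp only [mapWiZ, Set.mem_setOf_eq]
    constructor
    · rintro ⟨x, hx, hxy⟩
      exact ⟨x, hx, (hGmmem (x, y)).mpr hxy⟩
    · rintro ⟨x, hx, hxy⟩
      exact ⟨x, hx, (hGmmem (x, y)).mp hxy⟩
  · have heq : Lplus (mpup D) = ofGraph (Gp : Set _) := congrArg ofGraph hLpGraph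
    rw [heq]
    refine reach_linear Gp (mapYXi X Y) ?_
    intro S
    ext y
    simp only [mapYXi, Set.mem_setOf_eq]
    constructor
    · rintro ⟨v, hv, rfl⟩
      exact ⟨X *ᵥ v, hv, (hGpmem (X *ᵥ v, Y *ᵥ v)).mpr ⟨v, rfl⟩⟩
    · rintro ⟨x, hx, hxy⟩
      obtain ⟨v, hv⟩ := (hGpmem (x, y)).mp hxy
      obtain ⟨hv1, hv2⟩ := Prod.mk.injEq .. ▸ hv
      exact ⟨v, hv1 ▸ hx, hv2.symm⟩
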